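/- For every positive integer k and every divisor d of 4k, the cycle C_{4k} admits a d-divisible α-labeling. -/

import Mathlib

/-- label-value map: t-th smallest allowed difference -/
def zu (m t : ℕ) : ℕ := t + (t - 1) / m

/-- index of the difference on edge pair j -/
def zA (k j : ℕ) : ℕ := if j < k then 4*k - 2*j else 4*k - 2*j - 1

/-- even-position labels -/
def zE (k m i : ℕ) : ℕ := ∑ j ∈ Finset.range i, (zu m (zA k j) - zu m (zA k j - 1))

/-- odd-position labels -/
def zO (k m i : ℕ) : ℕ := zE k m i + zu m (zA k i)

lemma zu_mono (m : ℕ) : StrictMono (zu m) := by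
  apply strictMono_nat_of_lt_succ
  intro t
  unfold zu
  have h : (t - 1) / m ≤ (t + 1 - 1) / m := Nat.div_le_div_right (by omega)
  omega

lemma zu_le_of_le {m s t : ℕ} (h : s ≤ t) : zu m s ≤ zu m t := (zu_mono m).le_iff_le.mpr h

lemma zu_zero (m : ℕ) : zu m 0 = 0 := by simp [zu]

lemma zu_one (m : ℕ) : zu m 1 = 1 := by simp [zu]

/-- step value: for t ≥ 2, `zu t - zu (t-1) = 1 + [m ∣ t-1]` -/
lemma zu_step (m t : ℕ) (hm : 0 < m) (ht : 2 ≤ t) :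
    zu m t - zu m (t - 1) = 1 + (if m ∣ (t - 1) then 1 else 0) := by
  obtain ⟨s, rfl⟩ : ∃ s, t = s + 2 := ⟨t - 2, by omega⟩
  unfold zu
  have h1 : (s + 2 - 1) / m = (s + 1) / m := by norm_num
  have h2 : (s + 1) / m = s / m + if m ∣ s + 1 then 1 else 0 := Nat.succ_div (a := s) (b := m)
  have h3 : s / m ≤ (s+1)/m := Nat.div_le_div_right (by omega)
  simp only [show s + 2 - 1 = s + 1 from rfl, show s + 2 - 1 - 1 = s from rfl]
  split at h2 <;> split <;> simp_all <;> omega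

lemma zA_pos {k j : ℕ} (h : j ≤ 2*k - 1) (hk : 0 < k) : 1 ≤ zA k j := by
  unfold zA; split <;> omega

lemma zA_le {k j : ℕ} : zA k j ≤ 4*k := by unfold zA; split <;> omega

lemma zA_two_le {k j : ℕ} (h : j ≤ 2*k - 2) (hk : 0 < k) : 2 ≤ zA k j := by
  unfold zA; split <;> omega

/-- descending property needed for O antitone -/
lemma zA_succ_lt {k j : ℕ} (h : j + 1 ≤ 2*k - 1) (hk : 0 < k) : zA k (j+1) < zA k j - 1 := by
  unfold zA
  split <;> split <;> omega

lemma zE_succ (k m i : ℕ) : zE k m (i+1) = zE k m i + (zu m (zA k i) - zu m (zA k i - 1)) :=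
  Finset.sum_range_succ _ i

lemma zE_zero (k m : ℕ) : zE k m 0 = 0 := rfl

lemma zE_succ' (k m i : ℕ) (hk : 0 < k) (hi : i ≤ 2*k - 1) :
    zE k m (i+1) + zu m (zA k i - 1) = zE k m i + zu m (zA k i) := by
  rw [zE_succ]
  have h1 : zu m (zA k i - 1) ≤ zu m (zA k i) := zu_le_of_le (by omega)
  omega

lemma zE_step_ge (k m i : ℕ) (hk : 0 < k) (hi : i ≤ 2*k - 1) :
    zE k m i + 1 ≤ zE k m (i+1) := by
  rw [zE_succ]
  have h1 : zu m (zA k i - 1) < zu m (zA k i) := (zu_mono m) (by have := zA_pos hi hk; omega)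
  omega

lemma zE_lt (k m : ℕ) (hk : 0 < k) : ∀ i', i' ≤ 2*k → ∀ i, i < i' → zE k m i < zE k m i' := by
  intro i'
  induction i' with
  | zero => omega
  | succ n ih =>
    intro hle i hi
    have hstep := zE_step_ge k m n hk (by omega)
    rcases Nat.lt_or_ge i n with h3 | h3
    · have h4 := ih (by omega) i h3
      omega
    · have : i = n := by omega
      subst this
      omega

lemma zO_anti (k m : ℕ) (hk : 0 < k) : ∀ i', i' ≤ 2*k - 1 → ∀ i, i < i' → zO k m i' < zO k m i := by
  intro i'
  induction i' with
  | zero => omega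
  | succ n ih =>
    intro hle i hi
    have key : zO k m (n+1) < zO k m n := by
      unfold zO
      rw [zE_succ]
      have h1 : zu m (zA k n - 1) ≤ zu m (zA k n) := zu_le_of_le (by omega)
      have h2' : zu m (zA k (n+1)) < zu m (zA k n - 1) := by
        have := zA_succ_lt (k := k) (j := n) (by omega) hk
        exact (zu_mono m) (by omega)
      omega
    rcases Nat.lt_or_ge i n with h3 | h3
    · have h4 := ih (by omega) i h3
      omega
    · have : i = n := by omega
      subst this
      omega

section helpers

lemma odd_dvd_two_mul {m x : ℕ} (hm2 : m % 2 = 1) : m ∣ 2*x ↔ m ∣ x := by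
  constructor
  · rintro ⟨t, ht⟩
    have h2 : (m * t) % 2 = (m % 2) * (t % 2) % 2 := Nat.mul_mod m t 2
    rw [hm2, one_mul] at h2
    have h3 : t % 2 = 0 := by omega
    obtain ⟨s, rfl⟩ : ∃ s, t = 2*s := ⟨t/2, by omega⟩
    have h4 : m * (2*s) = 2*(m*s) := by ring
    exact ⟨s, by omega⟩
  · rintro ⟨t, ht⟩
    exact ⟨2*t, by subst ht; ring⟩

lemma dvd_sub_iff' {m a b : ℕ} (hab : a ≤ b) (hb : m ∣ b) : (m ∣ b - a ↔ m ∣ a) := by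
  constructor
  · intro h
    have h2 := Nat.dvd_sub hb h
    have h3 : b - (b - a) = a := by omega
    rwa [h3] at h2
  · intro h
    exact Nat.dvd_sub hb h

lemma two_mul_dvd_two_mul {K x : ℕ} : 2*K ∣ 2*x ↔ K ∣ x := by
  constructor
  · rintro ⟨t, ht⟩
    have h1 : 2*K*t = 2*(K*t) := by ring
    exact ⟨t, by omega⟩
  · rintro ⟨t, rfl⟩
    exact ⟨t, by ring⟩

lemma twoM_dvd_odd {m i : ℕ} (hm2 : m % 2 = 1) : (2*m ∣ 2*i + m + 1) ↔ (m ∣ 2*i + 1) := by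
  constructor
  · rintro ⟨s, hs⟩
    have h0 : 2*m*s = 2*(m*s) := by ring
    have h1 : 2*i + 1 + m = m * (2*s) := by
      have h2 : m * (2*s) = 2*(m*s) := by ring
      omega
    have h2 : m ∣ 2*i + 1 + m := ⟨2*s, h1⟩
    have h3 := Nat.dvd_sub h2 (dvd_refl m)
    simpa using h3
  · rintro ⟨t, ht⟩
    have h2 : (m * t) % 2 = (m % 2) * (t % 2) % 2 := Nat.mul_mod m t 2
    rw [hm2, one_mul] at h2
    have h3 : t % 2 = 1 := by omega
    obtain ⟨s, rfl⟩ : ∃ s, t = 2*s + 1 := ⟨t/2, by omega⟩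
    refine ⟨s + 1, ?_⟩
    have h4 : m * (2*s+1) = 2*(m*s) + m := by ring
    have h5 : 2*m*(s+1) = 2*(m*s) + 2*m := by ring
    omega

lemma div_aux1 {K d : ℕ} (hK : 0 < K) (hd : 0 < d) : (K * d - 1) / K = d - 1 := by
  obtain ⟨e, rfl⟩ : ∃ e, d = e + 1 := ⟨d - 1, by omega⟩
  have h1 : K * (e+1) = K*e + K := by ring
  have h2 : (e+1-1)*K = K*e := by simp; ring
  have h3 : (e+1-1+1)*K = K*e + K := by
    rw [show e+1-1+1 = e+1 from rfl, mul_comm, h1]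
  apply Nat.div_eq_of_lt_le <;> omega

end helpers

section phases

variable {k d m : ℕ}

lemma m_pos (hm : 4*k = d*m) (hk : 0 < k) : 0 < m := by
  rcases Nat.eq_zero_or_pos m with h | h
  · subst h; omega
  · exact h

lemma zE_phase1_even (hm : 4*k = d*m) (hk : 0 < k) (hm2 : m % 2 = 0) :
    ∀ i, i ≤ k → zE k m i = i := by
  intro i
  induction i with
  | zero => intro _; rfl
  | succ n ih =>
    intro hn
    have hm0 : 0 < m := m_pos hm hk
    rw [zE_succ, ih (by omega)]
    have hA : zA k n = 4*k - 2*n := by unfold zA; rw [if_pos (by omega)]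
    rw [hA, zu_step m _ hm0 (by omega)]
    have hnd : ¬ (m ∣ 4*k - 2*n - 1) := by
      rintro ⟨t, ht⟩
      have h2 : (m * t) % 2 = (m % 2) * (t % 2) % 2 := Nat.mul_mod m t 2
      rw [hm2, zero_mul] at h2
      omega
    rw [if_neg hnd]

lemma zE_phase1_odd (hm : 4*k = d*m) (hk : 0 < k) (hm2 : m % 2 = 1) :
    ∀ i, i ≤ k → zE k m i = i + (2*i + m - 1) / (2*m) := by
  intro i
  induction i with
  | zero =>
    intro _
    rw [zE_zero, Nat.div_eq_of_lt (by omega)]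
  | succ n ih =>
    intro hn
    have hm0 : 0 < m := by omega
    rw [zE_succ, ih (by omega)]
    have hA : zA k n = 4*k - 2*n := by unfold zA; rw [if_pos (by omega)]
    rw [hA, zu_step m _ hm0 (by omega)]
    have e1 : 2*(n+1) + m - 1 = ((2*n + m - 1) + 1) + 1 := by omega
    have s1 : ((2*n + m - 1) + 1) / (2*m) = (2*n + m - 1) / (2*m)
        + if 2*m ∣ (2*n + m - 1) + 1 then 1 else 0 := Nat.succ_div
    have s2 : (((2*n + m - 1) + 1) + 1) / (2*m) = ((2*n + m - 1) + 1) / (2*m)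
        + if 2*m ∣ ((2*n + m - 1) + 1) + 1 then 1 else 0 := Nat.succ_div
    have e3 : (2*n + m - 1) + 1 = 2*n + m := by omega
    have e4 : ((2*n + m - 1) + 1) + 1 = 2*n + m + 1 := by omega
    have h5 : ¬ (2*m ∣ 2*n + m) := by
      rintro ⟨t, ht⟩
      have h0 : 2*m*t = 2*(m*t) := by ring
      have h2 : (m * t) % 2 = (m % 2) * (t % 2) % 2 := Nat.mul_mod m t 2
      rw [hm2, one_mul] at h2
      omega
    have hdvd4k : m ∣ 4*k := Dvd.intro_left d hm.symm
    have h6 : (2*m ∣ 2*n + m + 1) ↔ (m ∣ 4*k - (2*n+1)) := by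
      rw [twoM_dvd_odd hm2]
      rw [dvd_sub_iff' (by omega) hdvd4k]
    have h7 : 4*k - 2*n - 1 = 4*k - (2*n+1) := by omega
    rw [h7, e1, s2, s1, e3, if_neg h5]
    by_cases hc : m ∣ 4*k - (2*n+1)
    · rw [if_pos hc, if_pos (h6.mpr hc)]
      omega
    · rw [if_neg hc, if_neg (fun h => hc (h6.mp h))]
      omega

lemma zE_phase2 (hk : 0 < k) (K : ℕ) (hK : 0 < K)
    (hstep : ∀ j, k ≤ j → j < 2*k - 1 →
      zu m (zA k j) - zu m (zA k j - 1) = 1 + if K ∣ (j+1) then 1 else 0) :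
    ∀ i, k ≤ i → i ≤ 2*k - 1 → zE k m i + k / K = zE k m k + (i - k) + i / K := by
  intro i
  induction i with
  | zero => intro h1 h2; omega
  | succ n ih =>
    intro h1 h2
    rcases Nat.lt_or_ge n k with h3 | h3
    · have : k = n + 1 := by omega
      rw [this]
      omega
    · have ih' := ih h3 (by omega)
      rw [zE_succ, hstep n h3 (by omega)]
      have s1 : (n+1) / K = n / K + if K ∣ n + 1 then 1 else 0 := Nat.succ_div
      by_cases hc : K ∣ n + 1
      · rw [if_pos hc] at s1 ⊢; omega
      · rw [if_neg hc] at s1 ⊢; omega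

lemma zE_final (hm : 4*k = d*m) (hk : 0 < k) (hd : 0 < d) :
    zE k m (2*k - 1) = 2*k - 1 + (2*k - 1) / m := by
  have hm0 : 0 < m := m_pos hm hk
  rcases Nat.even_or_odd m with hme | hmo
  · -- m even, m = 2K
    obtain ⟨K, hKm⟩ : ∃ K, m = 2*K := by
      rcases hme with ⟨K, h⟩; exact ⟨K, by omega⟩
    have hK : 0 < K := by omega
    have hm' := hm
    rw [hKm] at hm'
    have h2k : 2*k = K*d := by
      have : d*(2*K) = 2*(K*d) := by ring
      omega
    have hstep : ∀ j, k ≤ j → j < 2*k - 1 →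
        zu m (zA k j) - zu m (zA k j - 1) = 1 + if K ∣ (j+1) then 1 else 0 := by
      intro j hj1 hj2
      have hA : zA k j = 4*k - 2*j - 1 := by unfold zA; rw [if_neg (by omega)]
      rw [hA, zu_step m _ hm0 (by omega)]
      have e1 : 4*k - 2*j - 1 - 1 = 2*(2*k - j - 1) := by omega
      have hdvd2k : K ∣ 2*k := ⟨d, h2k⟩
      have h3 : (K ∣ 2*k - (j+1)) ↔ K ∣ (j+1) := dvd_sub_iff' (by omega) hdvd2k
      have e2 : 2*k - j - 1 = 2*k - (j+1) := by omega
      have hiff : (m ∣ 4*k - 2*j - 1 - 1) ↔ (K ∣ j + 1) := by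
        rw [e1, hKm, two_mul_dvd_two_mul, e2, h3]
      simp only [hiff]
    have hph2 := zE_phase2 hk K hK hstep (2*k - 1) (by omega) (le_refl _)
    have hph1 := zE_phase1_even hm hk (by omega) k (le_refl _)
    rw [hph1] at hph2
    have hd1 : (2*k - 1) / K = d - 1 := by
      have h9 : 2*k - 1 = K*d - 1 := by omega
      rw [h9, div_aux1 hK hd]
    rcases Nat.even_or_odd d with hde | hdo
    · obtain ⟨e, hed⟩ : ∃ e, d = 2*e := by rcases hde with ⟨e, h⟩; exact ⟨e, by omega⟩
      have he : 0 < e := by omega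
      have hkKe : k = K*e := by
        have h8 : K*(2*e) = 2*(K*e) := by ring
        rw [hed] at h2k
        omega
      have hkK : k / K = e := by rw [hkKe, Nat.mul_div_cancel_left e hK]
      have hm1 : (2*k - 1)/m = e - 1 := by
        have hme' : m*e = 2*(K*e) := by rw [hKm]; ring
        have h1 : 2*k - 1 = m*e - 1 := by omega
        rw [h1, div_aux1 hm0 he]
      rw [hkK, hd1] at hph2
      rw [hm1]
      omega
    · -- d odd: K must be even
      obtain ⟨f, hdf⟩ : ∃ f, d = 2*f + 1 := by
        rcases hdo with ⟨f, h⟩; exact ⟨f, by omega⟩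
      have hKe : K % 2 = 0 := by
        have h4 : (K*d) % 2 = (K % 2) * (d % 2) % 2 := Nat.mul_mod K d 2
        have h5 : d % 2 = 1 := by omega
        rw [h5, mul_one] at h4
        omega
      obtain ⟨K', hK'⟩ : ∃ K', K = 2*K' := ⟨K/2, by omega⟩
      have hK'0 : 0 < K' := by omega
      have hr1 : K*d = 4*(K'*f) + 2*K' := by rw [hK', hdf]; ring
      have hkval : k = 2*(K'*f) + K' := by omega
      have hkK : k / K = f := by
        rw [hK']
        apply Nat.div_eq_of_lt_le
        · have : f * (2*K') = 2*(K'*f) := by ring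
          omega
        · have : (f+1) * (2*K') = 2*(K'*f) + 2*K' := by ring
          omega
      have hm1 : (2*k - 1)/m = f := by
        rw [hKm, hK']
        apply Nat.div_eq_of_lt_le
        · have : f * (2*(2*K')) = 4*(K'*f) := by ring
          omega
        · have : (f+1) * (2*(2*K')) = 4*(K'*f) + 4*K' := by ring
          omega
      rw [hkK, hd1] at hph2
      rw [hm1]
      omega
  · -- m odd
    have hm2 : m % 2 = 1 := Nat.odd_iff.mp hmo
    have hdvd2k : m ∣ 2*k := by
      have h4k : m ∣ 4*k := Dvd.intro_left d hm.symm
      have h44 : (4:ℕ)*k = 2*(2*k) := by ring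
      rw [h44] at h4k
      exact (odd_dvd_two_mul hm2).mp h4k
    obtain ⟨e2, he2⟩ := hdvd2k
    have hstep : ∀ j, k ≤ j → j < 2*k - 1 →
        zu m (zA k j) - zu m (zA k j - 1) = 1 + if m ∣ (j+1) then 1 else 0 := by
      intro j hj1 hj2
      have hA : zA k j = 4*k - 2*j - 1 := by unfold zA; rw [if_neg (by omega)]
      rw [hA, zu_step m _ hm0 (by omega)]
      have e1 : 4*k - 2*j - 1 - 1 = 2*(2*k - j - 1) := by omega
      have h3 : (m ∣ 2*k - (j+1)) ↔ m ∣ (j+1) := dvd_sub_iff' (by omega) ⟨e2, he2⟩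
      have e2' : 2*k - j - 1 = 2*k - (j+1) := by omega
      have hiff : (m ∣ 4*k - 2*j - 1 - 1) ↔ (m ∣ j + 1) := by
        rw [e1, odd_dvd_two_mul hm2, e2', h3]
      simp only [hiff]
    have hph2 := zE_phase2 hk m hm0 hstep (2*k - 1) (by omega) (le_refl _)
    have hph1 := zE_phase1_odd hm hk hm2 k (le_refl _)
    have he2even : e2 % 2 = 0 := by
      have h4 : (m*e2) % 2 = (m % 2) * (e2 % 2) % 2 := Nat.mul_mod m e2 2
      rw [hm2, one_mul] at h4
      omega
    obtain ⟨e, rfl⟩ : ∃ e, e2 = 2*e := ⟨e2/2, by omega⟩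
    have hme' : m*(2*e) = 2*(m*e) := by ring
    have hke : k = m*e := by omega
    have he0 : 0 < e := by
      rcases Nat.eq_zero_or_pos e with h | h
      · subst h; simp at hke; omega
      · exact h
    have hph1' : zE k m k = k + e := by
      rw [hph1]
      congr 1
      have h1 : 2*k + m - 1 = (m-1) + (2*m)*e := by
        have : (2*m)*e = 2*(m*e) := by ring
        omega
      rw [h1, Nat.add_mul_div_left _ _ (by omega : 0 < 2*m), Nat.div_eq_of_lt (by omega)]
      omega
    have hkm : k / m = e := by rw [hke, Nat.mul_div_cancel_left e hm0]
    rw [hph1', hkm] at hph2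
    omega

end phases

section image

variable {k d m : ℕ}

lemma zu_mem (hm : 4*k = d*m) (hk : 0 < k) (hd : 0 < d) {t : ℕ} (h1 : 1 ≤ t) (h2 : t ≤ 4*k) :
    zu m t ∈ Finset.Icc 1 (d*(m+1)-1) \ (Finset.Icc 1 (d-1)).image (fun i => (m+1)*i) := by
  have hm0 : 0 < m := m_pos hm hk
  have h3 : m*((t-1)/m) + (t-1)%m = t-1 := Nat.div_add_mod (t-1) m
  set q := (t-1)/m with hq
  set r := (t-1)%m with hr
  have h4 : r < m := Nat.mod_lt _ hm0
  have hring1 : q*(m+1) = m*q + q := by ring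
  have hzu : zu m t = q*(m+1) + (r+1) := by
    unfold zu
    rw [← hq]
    omega
  have hqd : q < d := by
    have hring2 : d*m = m*d := by ring
    have h5 : m*q < m*d := by omega
    exact Nat.lt_of_mul_lt_mul_left h5
  obtain ⟨d', rfl⟩ : ∃ d', d = d'+1 := ⟨d-1, by omega⟩
  rw [Finset.mem_sdiff, Finset.mem_Icc]
  refine ⟨⟨by omega, ?_⟩, ?_⟩
  · have h6 : q*(m+1) ≤ d'*(m+1) := Nat.mul_le_mul_right _ (by omega)
    have h7 : d'*(m+1) + (m+1) = (d'+1)*(m+1) := by ring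
    omega
  · rw [Finset.mem_image]
    rintro ⟨i, hi, hix⟩
    rw [Finset.mem_Icc] at hi
    have h8 : ((m+1)*q + (r+1)) % (m+1) = (r+1) % (m+1) := Nat.mul_add_mod _ _ _
    have h9 : (r+1) % (m+1) = r+1 := Nat.mod_eq_of_lt (by omega)
    have h10 : ((m+1)*i) % (m+1) = 0 := Nat.mul_mod_right _ _
    have h11 : (m+1)*q = q*(m+1) := by ring
    rw [hzu, ← h11] at hix
    have h12 : ((m+1)*i) % (m+1) = ((m+1)*q + (r+1)) % (m+1) := by rw [hix]
    omega

lemma mem_zu (hm : 4*k = d*m) (hk : 0 < k) (hd : 0 < d) {x : ℕ}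
    (hx : x ∈ Finset.Icc 1 (d*(m+1)-1) \ (Finset.Icc 1 (d-1)).image (fun i => (m+1)*i)) :
    ∃ t, 1 ≤ t ∧ t ≤ 4*k ∧ zu m t = x := by
  have hm0 : 0 < m := m_pos hm hk
  rw [Finset.mem_sdiff, Finset.mem_Icc] at hx
  obtain ⟨⟨hx1, hx2⟩, hnot⟩ := hx
  rw [Finset.mem_image] at hnot
  push_neg at hnot
  have h3 : (m+1)*(x/(m+1)) + x%(m+1) = x := Nat.div_add_mod x (m+1)
  set q := x/(m+1) with hq
  set s := x%(m+1) with hs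
  have h4 : s < m+1 := Nat.mod_lt _ (by omega)
  have hqd : q < d := by
    have h13 : d*(m+1) = (m+1)*d := by ring
    have h5 : (m+1)*q < (m+1)*d := by omega
    exact Nat.lt_of_mul_lt_mul_left h5
  have hs0 : s ≠ 0 := by
    intro h0
    have hq1 : 1 ≤ q := by
      rcases Nat.eq_zero_or_pos q with h | h
      · rw [h, Nat.mul_zero] at h3; omega
      · exact h
    exact hnot q (Finset.mem_Icc.mpr ⟨hq1, by omega⟩) (by omega)
  obtain ⟨d', rfl⟩ : ∃ d', d = d'+1 := ⟨d-1, by omega⟩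
  refine ⟨q*m + s, by omega, ?_, ?_⟩
  · have h6 : q*m ≤ d'*m := Nat.mul_le_mul_right _ (by omega)
    have h7 : d'*m + m = (d'+1)*m := by ring
    omega
  · unfold zu
    have e1 : q*m + s - 1 = (s-1) + m*q := by
      have : q*m = m*q := by ring
      omega
    rw [e1, Nat.add_mul_div_left _ _ hm0, Nat.div_eq_of_lt (by omega)]
    have h15 : (m+1)*q = m*q + q := by ring
    have h16 : q*m = m*q := by ring
    omega

end image

section assembly

variable {k d m : ℕ}

/-- the labeling function on raw indices -/
def zF (k m v : ℕ) : ℕ := if v % 2 = 0 then zE k m (v/2) else zO k m (v/2)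

lemma zE_le_final (hk : 0 < k) {i : ℕ} (hi : i ≤ 2*k - 1) : zE k m i ≤ zE k m (2*k-1) := by
  rcases Nat.lt_or_ge i (2*k-1) with h | h
  · exact le_of_lt (zE_lt k m hk (2*k-1) (by omega) i h)
  · have : i = 2*k-1 := by omega
    rw [this]

lemma zO_ge_final (hk : 0 < k) {i : ℕ} (hi : i ≤ 2*k - 1) : zO k m (2*k-1) ≤ zO k m i := by
  rcases Nat.lt_or_ge i (2*k-1) with h | h
  · exact le_of_lt (zO_anti k m hk (2*k-1) (le_refl _) i h)
  · have : i = 2*k-1 := by omega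
    rw [this]

lemma zA_last (hk : 0 < k) : zA k (2*k-1) = 1 := by
  unfold zA
  rw [if_neg (by omega)]
  omega

lemma zO_last (hk : 0 < k) : zO k m (2*k-1) = zE k m (2*k-1) + 1 := by
  unfold zO
  rw [zA_last hk, zu_one]

lemma key_lt (hk : 0 < k) {i j : ℕ} (hi : i ≤ 2*k-1) (hj : j ≤ 2*k-1) :
    zE k m i < zO k m j := by
  have h1 := zE_le_final (m := m) hk hi
  have h2 := zO_ge_final (m := m) hk hj
  have h3 := zO_last (m := m) hk
  omega

lemma zA_first (hk : 0 < k) : zA k 0 = 4*k := by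
  unfold zA
  rw [if_pos hk]
  omega

lemma zO_first (hm : 4*k = d*m) (hk : 0 < k) (hd : 0 < d) : zO k m 0 = 4*k + d - 1 := by
  unfold zO
  rw [zA_first hk, zE_zero]
  unfold zu
  have h1 : (4*k-1)/m = d-1 := by
    have e1 : 4*k - 1 = m*d - 1 := by
      have : d*m = m*d := by ring
      omega
    rw [e1, div_aux1 (m_pos hm hk) hd]
  omega

lemma zO_le_first (hm : 4*k = d*m) (hk : 0 < k) (hd : 0 < d) {i : ℕ} (hi : i ≤ 2*k-1) :
    zO k m i ≤ 4*k + d - 1 := by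
  rw [← zO_first hm hk hd]
  rcases Nat.eq_zero_or_pos i with h | h
  · rw [h]
  · exact le_of_lt (zO_anti k m hk i hi 0 h)

/-- closing difference equals `zu m (2*k)` -/
lemma zO_last_eq (hm : 4*k = d*m) (hk : 0 < k) (hd : 0 < d) :
    zO k m (2*k-1) = zu m (2*k) := by
  rw [zO_last hk, zE_final hm hk hd]
  unfold zu
  omega

lemma diff_a (i : ℕ) : ((zO k m i : ℤ) - (zE k m i : ℤ)).natAbs = zu m (zA k i) := by
  unfold zO
  push_cast
  have : (zE k m i : ℤ) + (zu m (zA k i) : ℤ) - (zE k m i : ℤ) = (zu m (zA k i) : ℤ) := by ring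
  rw [this]
  exact Int.natAbs_natCast _

lemma diff_b (hk : 0 < k) {i : ℕ} (hi : i ≤ 2*k - 1) :
    ((zO k m i : ℤ) - (zE k m (i+1) : ℤ)).natAbs = zu m (zA k i - 1) := by
  have h := zE_succ' k m i hk hi
  have hn : zE k m (i+1) + zu m (zA k i - 1) = zO k m i := by unfold zO; rw [h]
  have h2 : (zO k m i : ℤ) = (zE k m (i+1) : ℤ) + (zu m (zA k i - 1) : ℤ) := by
    exact_mod_cast hn.symm
  rw [h2]
  have : (zE k m (i+1) : ℤ) + (zu m (zA k i - 1) : ℤ) - (zE k m (i+1) : ℤ)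
      = (zu m (zA k i - 1) : ℤ) := by ring
  rw [this]
  exact Int.natAbs_natCast _

end assembly

section adj

lemma natAbs_comm (a b : ℤ) : (a - b).natAbs = (b - a).natAbs := by omega

lemma fin_sub_val_eq {n : ℕ} (u v : Fin n) : (u - v).val = (n - v.val + u.val) % n := by
  rw [Fin.sub_def]

lemma adj_inv {n : ℕ} (hn : 2 ≤ n) (u v : Fin n) (h : (u - v).val = 1) :
    u.val = v.val + 1 ∨ (v.val = n - 1 ∧ u.val = 0) := by
  rw [fin_sub_val_eq] at h
  have hu := u.isLt
  have hv := v.isLt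
  rcases Nat.lt_or_ge (n - v.val + u.val) n with hlt | hge
  · rw [Nat.mod_eq_of_lt hlt] at h
    right
    omega
  · rw [Nat.mod_eq_sub_mod hge, Nat.mod_eq_of_lt (by omega)] at h
    left
    omega

lemma adj_succ {n : ℕ} (a : ℕ) (h : a + 1 < n) :
    (SimpleGraph.cycleGraph n).Adj ⟨a+1, h⟩ ⟨a, by omega⟩ := by
  rw [SimpleGraph.cycleGraph_adj']
  left
  rw [fin_sub_val_eq]
  have e : n - a + (a+1) = n + 1 := by omega
  simp only [e]
  rw [Nat.add_mod_left, Nat.mod_eq_of_lt (by omega)]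

lemma adj_wrap {n : ℕ} (hn : 2 ≤ n) :
    (SimpleGraph.cycleGraph n).Adj ⟨0, by omega⟩ ⟨n-1, by omega⟩ := by
  rw [SimpleGraph.cycleGraph_adj']
  left
  rw [fin_sub_val_eq]
  have e : n - (n-1) + 0 = 1 := by omega
  simp only [e]
  exact Nat.mod_eq_of_lt (by omega)

variable {k m : ℕ}

lemma zF_even (j : ℕ) : zF k m (2*j) = zE k m j := by
  unfold zF
  rw [if_pos (by omega)]
  congr 1
  omega

lemma zF_odd (j : ℕ) : zF k m (2*j+1) = zO k m j := by
  unfold zF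
  rw [if_neg (by omega)]
  congr 1
  omega

lemma zF_even' (j : ℕ) : zF k m (2*j+2) = zE k m (j+1) := by
  have e : 2*j+2 = 2*(j+1) := by omega
  rw [e, zF_even]

end adj

/-- The set of absolute differences of labels along the edges of a graph. -/
def diffSet {V : Type*} (G : SimpleGraph V) (f : V → ℕ) : Set ℕ :=
  {n | ∃ u v, G.Adj u v ∧ ((f u : ℤ) - (f v : ℤ)).natAbs = n}

/-- for every positive integer `k` and every divisor `d` of `4k`,
the cycle `C_{4k}` admits a `d`-divisible `α`-labeling (with `m = 4k/d`; the
bipartition classes are the even-indexed and odd-indexed vertices). -/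
theorem stmt_8 (k d : ℕ) (hk : 0 < k) (hd : 0 < d) (hdvd : d ∣ 4 * k) :
    ∃ f : Fin (4 * k) → ℕ,
      Function.Injective f ∧
      (∀ v, f v ≤ d * (4 * k / d + 1) - 1) ∧
      diffSet (SimpleGraph.cycleGraph (4 * k)) f =
        ↑((Finset.Icc 1 (d * (4 * k / d + 1) - 1)) \
          ((Finset.Icc 1 (d - 1)).image (fun i => (4 * k / d + 1) * i))) ∧
      ((∀ a b : Fin (4 * k), Even a.val → ¬ Even b.val → f a < f b) ∨
       (∀ a b : Fin (4 * k), ¬ Even a.val → Even b.val → f a < f b)) := by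
  obtain ⟨m, hm⟩ := hdvd
  have hmq : 4 * k / d = m := by rw [hm, Nat.mul_div_cancel_left m hd]
  have hm0 : 0 < m := m_pos hm hk
  rw [hmq]
  have hL : d * (m + 1) - 1 = 4*k + d - 1 := by
    have h0 : d*(m+1) = d*m + d := by ring
    omega
  refine ⟨fun v => zF k m v.val, ?_, ?_, ?_, ?_⟩
  · -- injectivity
    intro a b hab
    simp only at hab
    have ha2 : a.val / 2 ≤ 2*k - 1 := by have := a.isLt; omega
    have hb2 : b.val / 2 ≤ 2*k - 1 := by have := b.isLt; omega
    unfold zF at hab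
    apply Fin.ext
    by_cases pa : a.val % 2 = 0 <;> by_cases pb : b.val % 2 = 0
    · rw [if_pos pa, if_pos pb] at hab
      rcases lt_trichotomy (a.val/2) (b.val/2) with h | h | h
      · have := zE_lt k m hk (b.val/2) (by omega) (a.val/2) h; omega
      · omega
      · have := zE_lt k m hk (a.val/2) (by omega) (b.val/2) h; omega
    · rw [if_pos pa, if_neg pb] at hab
      have := key_lt (m := m) hk ha2 hb2; omega
    · rw [if_neg pa, if_pos pb] at hab
      have := key_lt (m := m) hk hb2 ha2; omega
    · rw [if_neg pa, if_neg pb] at hab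
      rcases lt_trichotomy (a.val/2) (b.val/2) with h | h | h
      · have := zO_anti k m hk (b.val/2) hb2 (a.val/2) h; omega
      · omega
      · have := zO_anti k m hk (a.val/2) ha2 (b.val/2) h; omega
  · -- bound
    intro v
    simp only
    have hv2 : v.val / 2 ≤ 2*k - 1 := by have := v.isLt; omega
    rw [hL]
    unfold zF
    have hO := zO_le_first hm hk hd hv2
    have hE : zE k m (v.val/2) < zO k m (v.val/2) := key_lt (m := m) hk hv2 hv2
    split <;> omega
  · -- diffSet
    ext x
    simp only [diffSet, Set.mem_setOf_eq, Finset.mem_coe]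
    constructor
    · rintro ⟨u, v, hadj, hx⟩
      rw [SimpleGraph.cycleGraph_adj'] at hadj
      subst hx
      have main : ∀ u v : Fin (4*k), (u - v).val = 1 →
          ((zF k m u.val : ℤ) - (zF k m v.val : ℤ)).natAbs ∈
            Finset.Icc 1 (d*(m+1)-1) \ (Finset.Icc 1 (d-1)).image (fun i => (m+1)*i) := by
        intro u v huv
        rcases adj_inv (by omega) u v huv with h | ⟨h1, h2⟩
        · -- u.val = v.val + 1
          have hv := v.isLt
          by_cases pv : v.val % 2 = 0
          · obtain ⟨j, hj⟩ : ∃ j, v.val = 2*j := ⟨v.val/2, by omega⟩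
            have hju : u.val = 2*j+1 := by omega
            have hjb : j ≤ 2*k-1 := by omega
            rw [hj, hju, zF_even, zF_odd, diff_a]
            exact zu_mem hm hk hd (zA_pos hjb hk) zA_le
          · obtain ⟨j, hj⟩ : ∃ j, v.val = 2*j+1 := ⟨v.val/2, by omega⟩
            have hju : u.val = 2*j+2 := by omega
            have hjb : j ≤ 2*k-2 := by have := u.isLt; omega
            rw [hj, hju, zF_odd, zF_even', natAbs_comm, diff_b hk (by omega)]
            refine zu_mem hm hk hd ?_ ?_
            · have := zA_two_le hjb hk; omega
            · have := zA_le (k := k) (j := j); omega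
          -- wraparound : v = 4k-1, u = 0
        · have hv1 : v.val = 2*(2*k-1)+1 := by omega
          have hu0 : u.val = 2*0 := by omega
          rw [hv1, hu0, zF_even, zF_odd, zE_zero, natAbs_comm]
          have he : ((0:ℕ):ℤ) - (zO k m (2*k-1) : ℤ) = -(zO k m (2*k-1) : ℤ) := by ring
          rw [zO_last_eq hm hk hd]
          have : ((zu m (2*k) : ℤ) - ((0:ℕ):ℤ)).natAbs = zu m (2*k) := by
            simp
          rw [this]
          exact zu_mem hm hk hd (by omega) (by omega)
      rcases hadj with h | h
      · exact main u v h
      · rw [natAbs_comm]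
        exact main v u h
    · intro hxS
      obtain ⟨t, ht1, ht2, rfl⟩ := mem_zu hm hk hd hxS
      by_cases hmid : t = 2*k
      · -- closing edge
        refine ⟨⟨0, by omega⟩, ⟨4*k-1, by omega⟩, adj_wrap (by omega), ?_⟩
        simp only
        have h1 : (4*k-1) = 2*(2*k-1)+1 := by omega
        have h0 : (0:ℕ) = 2*0 := rfl
        rw [h1, h0, zF_even, zF_odd, zE_zero, natAbs_comm, zO_last_eq hm hk hd, hmid]
        simp
      · rcases Nat.lt_or_ge t (2*k) with hlow | hhigh
        · -- t < 2k : second-phase edges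
          by_cases pt : t % 2 = 1
          · -- t odd, t ≤ 2k-1 : edge (2j, 2j+1), j = (4k-1-t)/2 ∈ [k, 2k-1]
            set j := (4*k-1-t)/2 with hjdef
            have hj1 : k ≤ j := by omega
            have hj2 : j ≤ 2*k-1 := by omega
            have hA : zA k j = t := by unfold zA; rw [if_neg (by omega)]; omega
            refine ⟨⟨2*j+1, by omega⟩, ⟨2*j, by omega⟩, adj_succ (2*j) (by omega), ?_⟩
            simp only
            rw [zF_even, zF_odd, diff_a, hA]
          · -- t even, 2 ≤ t ≤ 2k-2 : edge (2j+1, 2j+2), j = (4k-2-t)/2 ∈ [k, 2k-2]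
            set j := (4*k-2-t)/2 with hjdef
            have hj1 : k ≤ j := by omega
            have hj2 : j ≤ 2*k-2 := by omega
            have hA : zA k j - 1 = t := by unfold zA; rw [if_neg (by omega)]; omega
            refine ⟨⟨2*j+2, by omega⟩, ⟨2*j+1, by omega⟩, ?_, ?_⟩
            · have := adj_succ (a := 2*j+1) (n := 4*k) (by omega)
              exact this
            · simp only
              rw [zF_odd, zF_even', natAbs_comm, diff_b hk (by omega), hA]
        · -- t > 2k : first-phase edges
          by_cases pt : t % 2 = 0
          · -- t even ≥ 2k+2 : edge (2j, 2j+1), j = (4k-t)/2 < k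
            set j := (4*k-t)/2 with hjdef
            have hj1 : j < k := by omega
            have hA : zA k j = t := by unfold zA; rw [if_pos hj1]; omega
            refine ⟨⟨2*j+1, by omega⟩, ⟨2*j, by omega⟩, adj_succ (2*j) (by omega), ?_⟩
            simp only
            rw [zF_even, zF_odd, diff_a, hA]
          · -- t odd ≥ 2k+1 : edge (2j+1, 2j+2), j = (4k-1-t)/2 < k
            set j := (4*k-1-t)/2 with hjdef
            have hj1 : j < k := by omega
            have hA : zA k j - 1 = t := by unfold zA; rw [if_pos hj1]; omega
            refine ⟨⟨2*j+2, by omega⟩, ⟨2*j+1, by omega⟩, ?_, ?_⟩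
            · exact adj_succ (a := 2*j+1) (n := 4*k) (by omega)
            · simp only
              rw [zF_odd, zF_even', natAbs_comm, diff_b hk (by omega), hA]
  · -- alpha condition
    left
    intro a b hea heb
    rw [Nat.even_iff] at hea heb
    simp only
    have ha2 : a.val / 2 ≤ 2*k - 1 := by have := a.isLt; omega
    have hb2 : b.val / 2 ≤ 2*k - 1 := by have := b.isLt; omega
    unfold zF
    rw [if_pos hea, if_neg heb]
    exact key_lt (m := m) hk ha2 hb2
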